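/- arXiv:1106.5448 — 2 statements merged into one kernel-verified Lean document; each statement's English description precedes it below -/
import Mathlib

section
/- Suppose |C| ≥ 2, the number n of non-manipulators is even, and a, b are distinct alternatives. Let P consist of n/2 copies of the vote V₁ = [a ≻ b ≻ rest] and n/2 copies of V₂ = [b ≻ a ≻ reverse of rest], where 'rest' is any fixed linear order on C \ {a,b}. Then for any vote W of the manipulator ranking a above b, a is the Condorcet winner of P ∪ {W}, and for any vote W' ranking b above a, b is the Condorcet winner of P ∪ {W'}. -/
/-- The reverse (dual) of a linear order. -/
def revOrder {C : Type*} (W : LinearOrder C) : LinearOrder C :=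
  @OrderDual.instLinearOrder C W

/-- Number of votes in profile `P` ranking `a` strictly above `b`. -/
def rankedAbove {C : Type*} (P : List (LinearOrder C)) (a b : C) : Nat :=
  P.countP (fun V => @decide (V.lt b a) (V.toDecidableLT b a))

/-- `D P a b`: number of votes ranking `a` above `b` minus number ranking `b` above `a`. -/
def D {C : Type*} (P : List (LinearOrder C)) (a b : C) : ℤ :=
  (rankedAbove P a b : ℤ) - (rankedAbove P b a : ℤ)

/-- `c` is a Condorcet winner of `P`: it beats every other alternative in pairwise majority. -/
def CondorcetWinner {C : Type*} (P : List (LinearOrder C)) (c : C) : Prop :=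
  ∀ y, y ≠ c → 0 < D P c y

/-- Let `P` consist of `k ≥ 1` copies of `V₁ = [a ≻ b ≻ σ]` and `k` copies of
`V₂ = [b ≻ a ≻ reverse of σ]` (so the number of non-manipulators `n = 2k` is even).
Then any manipulator vote ranking `a` above `b` makes `a` the Condorcet winner, and any
vote ranking `b` above `a` makes `b` the Condorcet winner. -/
theorem condorcet_pair_construction {C : Type*} (a b : C) (hab : a ≠ b)
    (V1 V2 : LinearOrder C)
    -- `a` is ranked first in `V₁`
    (h1a : ∀ x, x ≠ a → V1.lt x a)
    -- `b` is ranked second in `V₁`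
    (h1b : ∀ x, x ≠ a → x ≠ b → V1.lt x b)
    -- `b` is ranked first in `V₂`
    (h2b : ∀ x, x ≠ b → V2.lt x b)
    -- `a` is ranked second in `V₂`
    (h2a : ∀ x, x ≠ a → x ≠ b → V2.lt x a)
    -- on the remaining alternatives, `V₂` is the reverse of `V₁`
    (hrev : ∀ x y, x ≠ a → x ≠ b → y ≠ a → y ≠ b → (V1.lt x y ↔ V2.lt y x))
    (k : Nat) (hk : 0 < k) :
    (∀ W : LinearOrder C, W.lt b a →
      CondorcetWinner (W :: (List.replicate k V1 ++ List.replicate k V2)) a) ∧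
    (∀ W' : LinearOrder C, W'.lt a b →
      CondorcetWinner (W' :: (List.replicate k V1 ++ List.replicate k V2)) b) := by
  have hcnt : ∀ (p : LinearOrder C → Bool) (m : Nat) (V : LinearOrder C),
      (List.replicate m V).countP p = if p V then m else 0 := by
    intro p m V
    induction m with
    | zero => simp
    | succ n ih =>
      simp [List.replicate_succ, List.countP_cons, ih]
      split <;> rename_i h <;> simp [h] <;> omega
  have hra : ∀ (W : LinearOrder C) (x y : C),
      rankedAbove (W :: (List.replicate k V1 ++ List.replicate k V2)) x y =
      (@ite _ (W.lt y x) (W.toDecidableLT y x) 1 0) + ((@ite _ (V1.lt y x) (V1.toDecidableLT y x) k 0) +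
        (@ite _ (V2.lt y x) (V2.toDecidableLT y x) k 0)) := by
    intro W x y
    simp only [rankedAbove, List.countP_cons, List.countP_append, hcnt, decide_eq_true_eq]
    by_cases h : W.lt y x <;> by_cases h1 : V1.lt y x <;> by_cases h2 : V2.lt y x <;>
      simp [h, h1, h2] <;> omega
  constructor
  · intro W hW y hy
    unfold D
    rw [hra, hra]
    by_cases hyb : y = b
    · subst hyb
      have h1 : V1.lt y a := h1a y hy
      have h2 : ¬ V2.lt y a := @lt_asymm C (@LinearOrder.toPartialOrder C V2).toPreorder _ _ (h2b a hab)
      have h2' : V2.lt a y := h2b a hab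
      have h1' : ¬ V1.lt a y := @lt_asymm C (@LinearOrder.toPartialOrder C V1).toPreorder _ _ h1
      have hW' : ¬ W.lt a y := @lt_asymm C (@LinearOrder.toPartialOrder C W).toPreorder _ _ hW
      simp [hW, h1, h2, h2', h1', hW']
    · have h1 : V1.lt y a := h1a y hy
      have h2 : V2.lt y a := h2a y hy hyb
      have h1' : ¬ V1.lt a y := @lt_asymm C (@LinearOrder.toPartialOrder C V1).toPreorder _ _ h1
      have h2' : ¬ V2.lt a y := @lt_asymm C (@LinearOrder.toPartialOrder C V2).toPreorder _ _ h2
      simp [h1, h2, h1', h2']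
      by_cases hw : W.lt y a <;> simp [hw] <;> omega
  · intro W hW y hy
    unfold D
    rw [hra, hra]
    by_cases hya : y = a
    · subst hya
      have h2 : V2.lt y b := h2b y hab
      have h1 : ¬ V1.lt y b := by
        have : V1.lt b y := h1a b (Ne.symm hy)
        exact @lt_asymm C (@LinearOrder.toPartialOrder C V1).toPreorder _ _ this
      have h1' : V1.lt b y := h1a b (Ne.symm hy)
      have h2' : ¬ V2.lt b y := @lt_asymm C (@LinearOrder.toPartialOrder C V2).toPreorder _ _ h2
      have hW' : ¬ W.lt b y := @lt_asymm C (@LinearOrder.toPartialOrder C W).toPreorder _ _ hW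
      simp [hW, h1, h2, h1', h2', hW']
    · have h1 : V1.lt y b := h1b y hya hy
      have h2 : V2.lt y b := h2b y hy
      have h1' : ¬ V1.lt b y := @lt_asymm C (@LinearOrder.toPartialOrder C V1).toPreorder _ _ h1
      have h2' : ¬ V2.lt b y := @lt_asymm C (@LinearOrder.toPartialOrder C V2).toPreorder _ _ h2
      simp [h1, h2, h1', h2']
      by_cases hw : W.lt y b <;> simp [hw] <;> omega
end

section
/- Let V and U be distinct linear orders on C and let s be a strictly decreasing scoring vector. Then there exist alternatives c and c' such that s(V,c) > s(V,c') and s(U,c') ≥ s(V,c) > s(U,c), where s(W,x) denotes the score of x in vote W. In particular, c is ranked strictly higher than c' in V, and c' is ranked strictly higher than c in U. -/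
/-- Votes are represented by ranking functions `V : C ≃ Fin m` (`V x` is the 0-indexed
position of `x`, position `0` being the top); `s : Fin m → ℤ` is a strictly decreasing
scoring vector, and the score of `x` in vote `W` is `s (W x)`. If `V ≠ U`, there exist
alternatives `c`, `c'` with `s(V,c) > s(V,c')` and `s(U,c') ≥ s(V,c) > s(U,c)`;
in particular `c` is ranked strictly above `c'` in `V` and `c'` strictly above `c` in `U`. -/
theorem exists_score_witness {C : Type*} [Fintype C] (m : Nat)
    (hm : Fintype.card C = m) (s : Fin m → ℤ) (hs : StrictAnti s)
    (V U : C ≃ Fin m) (hVU : V ≠ U) :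
    ∃ c c' : C, s (V c) > s (V c') ∧ s (U c') ≥ s (V c) ∧ s (V c) > s (U c) ∧
      V c < V c' ∧ U c' < U c := by
  -- the set of alternatives where V and U disagree
  have hne : ∃ x : C, V x ≠ U x := by
    by_contra h
    push_neg at h
    exact hVU (Equiv.ext h)
  obtain ⟨x₀, hx₀⟩ := hne
  have hS : ({x : C | V x ≠ U x} : Finset C).Nonempty := by
    · refine ⟨x₀, ?_⟩
      simp [hx₀]
  obtain ⟨c, hcS, hcmin⟩ := Finset.exists_min_image _ (fun x => V x) hS
  have hcne : V c ≠ U c := by simpa using hcS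
  have hmin : ∀ y : C, V y < V c → V y = U y := by
    intro y hy
    by_contra h
    have := hcmin y (by simpa using h)
    omega
  -- U c > V c
  have hUc : V c < U c := by
    rcases lt_trichotomy (V c) (U c) with h | h | h
    · exact h
    · exact absurd h hcne
    · exfalso
      set y := V.symm (U c) with hy
      have hVy : V y = U c := V.apply_symm_apply _
      have hylt : V y < V c := by rw [hVy]; exact h
      have := hmin y hylt
      have hyc : y = c := U.injective (by rw [← this, hVy])
      rw [hyc] at hVy
      exact hcne hVy
  set c' := U.symm (V c) with hc'
  have hUc' : U c' = V c := U.apply_symm_apply _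
  have hne' : c' ≠ c := by
    intro h
    rw [h] at hUc'
    exact hcne hUc'.symm
  have hVc' : V c < V c' := by
    rcases lt_trichotomy (V c') (V c) with h | h | h
    · exfalso
      have := hmin c' h
      rw [hUc'] at this
      omega
    · exact absurd (V.injective h) hne'
    · exact h
  refine ⟨c, c', hs hVc', by rw [hUc'], hs hUc, hVc', by rw [hUc']; exact hUc⟩
end
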